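/- The relation f(xq^{2n})(1−x)(1−xq^{2n}) = f(x)(1−xq²)(1−xq^{2n−2}) together with f₀ = 1 uniquely determines the coefficients of the formal power series f(x) = Σ_{k≥0} f_k x^k, and these coefficients satisfy the recurrence f_k = −((1−q²)(1−q^{2n−2})/(1−q^{2n})) · Σ_{i=1}^{k} ((1−q^{2ni})/(1−q^{2nk})) f_{k−i} for all k ≥ 1. -/

import Mathlib

noncomputable section
open PowerSeries

namespace FAux

/-- Coefficient of `G * (1 - C u X) * (1 - C v X)`. -/
lemma coeff_mul_quad (G : PowerSeries ℂ) (u v : ℂ) (k : ℕ) :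
    coeff k (G * (1 - C u * X) * (1 - C v * X)) =
      coeff k G - (u + v) * (if 1 ≤ k then coeff (k - 1) G else 0)
        + u * v * (if 2 ≤ k then coeff (k - 2) G else 0) := by
  have hexp : G * (1 - C u * X) * (1 - C v * X)
      = G - C (u + v) * (G * X) + C (u * v) * (G * X * X) := by
    simp only [map_add, map_mul]
    ring
  rw [hexp, map_add, map_sub, coeff_C_mul, coeff_C_mul]
  rcases k with _ | _ | k
  · rw [coeff_zero_mul_X, coeff_zero_mul_X]
    norm_num
  · rw [coeff_succ_mul_X, coeff_succ_mul_X, coeff_zero_mul_X]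
    norm_num
  · rw [coeff_succ_mul_X, coeff_succ_mul_X, coeff_succ_mul_X]
    have h1 : (1:ℕ) ≤ k + 1 + 1 := by omega
    have h2 : (2:ℕ) ≤ k + 1 + 1 := by omega
    rw [if_pos h1, if_pos h2]
    have h3 : k + 1 + 1 - 1 = k + 1 := rfl
    have h4 : k + 1 + 1 - 2 = k := rfl
    rw [h3, h4]

lemma rel_of_eq {a b c : ℂ} {F : PowerSeries ℂ}
    (h : rescale a F * (1 - X) * (1 - C a * X)
        = F * (1 - C b * X) * (1 - C c * X)) (k : ℕ) :
    a ^ k * coeff k F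
        - (1 + a) * (if 1 ≤ k then a ^ (k - 1) * coeff (k - 1) F else 0)
        + a * (if 2 ≤ k then a ^ (k - 2) * coeff (k - 2) F else 0)
      = coeff k F - (b + c) * (if 1 ≤ k then coeff (k - 1) F else 0)
        + b * c * (if 2 ≤ k then coeff (k - 2) F else 0) := by
  have h1X : (1 - X : PowerSeries ℂ) = 1 - C (1 : ℂ) * X := by simp
  have hc := congrArg (coeff k) h
  rw [h1X, coeff_mul_quad, coeff_mul_quad] at hc
  simp only [coeff_rescale] at hc
  split_ifs at hc ⊢ <;> linear_combination hc

lemma eq_of_rel {a b c : ℂ} {F : PowerSeries ℂ}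
    (h : ∀ k : ℕ, a ^ k * coeff k F
        - (1 + a) * (if 1 ≤ k then a ^ (k - 1) * coeff (k - 1) F else 0)
        + a * (if 2 ≤ k then a ^ (k - 2) * coeff (k - 2) F else 0)
      = coeff k F - (b + c) * (if 1 ≤ k then coeff (k - 1) F else 0)
        + b * c * (if 2 ≤ k then coeff (k - 2) F else 0)) :
    rescale a F * (1 - X) * (1 - C a * X)
        = F * (1 - C b * X) * (1 - C c * X) := by
  have h1X : (1 - X : PowerSeries ℂ) = 1 - C (1 : ℂ) * X := by simp
  ext k
  rw [h1X, coeff_mul_quad, coeff_mul_quad]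
  simp only [coeff_rescale]
  have hk := h k
  split_ifs at hk ⊢ <;> linear_combination hk

/-- specialization at k = 1 -/
lemma rel_one {a b c : ℂ} {F : PowerSeries ℂ}
    (h : rescale a F * (1 - X) * (1 - C a * X)
        = F * (1 - C b * X) * (1 - C c * X)) :
    a * coeff 1 F - (1 + a) * constantCoeff F
      = coeff 1 F - (b + c) * constantCoeff F := by
  have h1 := rel_of_eq h 1
  norm_num at h1
  linear_combination h1

/-- specialization at k = m + 2 -/
lemma rel_two {a b c : ℂ} {F : PowerSeries ℂ}
    (h : rescale a F * (1 - X) * (1 - C a * X)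
        = F * (1 - C b * X) * (1 - C c * X)) (m : ℕ) :
    a ^ (m + 2) * coeff (m + 2) F - (1 + a) * (a ^ (m + 1) * coeff (m + 1) F)
        + a * (a ^ m * coeff m F)
      = coeff (m + 2) F - (b + c) * coeff (m + 1) F + b * c * coeff m F := by
  have h1 := rel_of_eq h (m + 2)
  have t1 : (1:ℕ) ≤ m + 2 := by omega
  have t2 : (2:ℕ) ≤ m + 2 := by omega
  rw [if_pos t1, if_pos t1, if_pos t2, if_pos t2] at h1
  have e1 : m + 2 - 1 = m + 1 := rfl
  have e2 : m + 2 - 2 = m := rfl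
  rw [e1, e2] at h1
  linear_combination h1

/-- the recursively-defined coefficients -/
def g (a b c : ℂ) : ℕ → ℂ
  | 0 => 1
  | 1 => ((b + c) - (1 + a)) / (1 - a)
  | (k + 2) => (((b + c) - (1 + a) * a ^ (k + 1)) * g a b c (k + 1)
      + (a ^ (k + 1) - a) * g a b c k) / (1 - a ^ (k + 2))

lemma g_zero (a b c : ℂ) : g a b c 0 = 1 := rfl

/-- the power series `mk (g a b c)` satisfies the functional equation -/
lemma mk_g_eq {a b c : ℂ} (hbc : b * c = a)
    (ha : ∀ k : ℕ, 1 ≤ k → (1 : ℂ) - a ^ k ≠ 0) :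
    rescale a (mk (g a b c)) * (1 - X) * (1 - C a * X)
        = mk (g a b c) * (1 - C b * X) * (1 - C c * X) := by
  apply eq_of_rel
  intro k
  rcases k with _ | _ | k
  · norm_num
  · have hne : (1 : ℂ) - a ≠ 0 := by simpa using ha 1 le_rfl
    have hg1 : (1 - a) * g a b c 1 = (b + c) - (1 + a) := by
      rw [g]; field_simp
    norm_num [coeff_mk]
    have hg0 : g a b c 0 = 1 := rfl
    rw [hg0]
    linear_combination (-1 : ℂ) * hg1
  · have hne : (1 : ℂ) - a ^ (k + 2) ≠ 0 := ha (k + 2) (by omega)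
    have hg2 : (1 - a ^ (k + 2)) * g a b c (k + 2)
        = ((b + c) - (1 + a) * a ^ (k + 1)) * g a b c (k + 1)
          + (a ^ (k + 1) - a) * g a b c k := by
      rw [g]; field_simp
    have t1 : (1:ℕ) ≤ k + 2 := by omega
    have t2 : (2:ℕ) ≤ k + 2 := by omega
    rw [if_pos t1, if_pos t1, if_pos t2, if_pos t2]
    have e1 : k + 2 - 1 = k + 1 := rfl
    have e2 : k + 2 - 2 = k := rfl
    rw [e1, e2]
    simp only [coeff_mk]
    linear_combination (-1 : ℂ) * hg2 - g a b c k * hbc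

/-- the sum in the recurrence, reindexed -/
lemma sum_reindex (a : ℂ) (f : ℕ → ℂ) (m : ℕ) :
    (∑ i ∈ Finset.Icc 1 m, (1 - a ^ i) * f (m - i))
      = ∑ j ∈ Finset.range m, (1 - a ^ (m - j)) * f j := by
  rw [← Finset.Ico_add_one_right_eq_Icc, Finset.sum_Ico_eq_sum_range]
  have hm : m + 1 - 1 = m := rfl
  rw [hm]
  rw [← Finset.sum_range_reflect]
  apply Finset.sum_congr rfl
  intro j hj
  rw [Finset.mem_range] at hj
  have e1 : 1 + (m - 1 - j) = m - j := by omega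
  rw [e1]
  have e2 : m - (m - j) = j := by omega
  rw [e2]

/-- the key three-term identity for the sums -/
lemma sum_key (a : ℂ) (f : ℕ → ℂ) (k : ℕ) :
    (∑ i ∈ Finset.Icc 1 (k + 2), (1 - a ^ i) * f (k + 2 - i))
      = (1 + a) * (∑ i ∈ Finset.Icc 1 (k + 1), (1 - a ^ i) * f (k + 1 - i))
        - a * (∑ i ∈ Finset.Icc 1 k, (1 - a ^ i) * f (k - i))
        + (1 - a) * f (k + 1) := by
  rw [sum_reindex, sum_reindex, sum_reindex]
  rw [Finset.sum_range_succ _ (k + 1), Finset.sum_range_succ _ k,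
    Finset.sum_range_succ _ k]
  have e1 : k + 2 - (k + 1) = 1 := by omega
  have e2 : k + 2 - k = 2 := by omega
  have e3 : k + 1 - k = 1 := by omega
  rw [e1, e2, e3]
  have hpt : ∀ j ∈ Finset.range k,
      (1 - a ^ (k + 2 - j)) * f j
        = (1 + a) * ((1 - a ^ (k + 1 - j)) * f j) - a * ((1 - a ^ (k - j)) * f j) := by
    intro j hj
    rw [Finset.mem_range] at hj
    have e4 : k + 2 - j = (k - j) + 2 := by omega
    have e5 : k + 1 - j = (k - j) + 1 := by omega
    rw [e4, e5]
    ring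
  rw [Finset.sum_congr rfl hpt, Finset.sum_sub_distrib, ← Finset.mul_sum, ← Finset.mul_sum]
  ring

/-- the main recurrence, denominator-free form, by strong induction -/
lemma rec_main {a b c : ℂ} {F : PowerSeries ℂ} (hbc : b * c = a)
    (h : rescale a F * (1 - X) * (1 - C a * X)
        = F * (1 - C b * X) * (1 - C c * X)) :
    ∀ k : ℕ, (1 - a) * ((1 - a ^ k) * coeff k F)
      = -((1 - b) * (1 - c)) * ∑ i ∈ Finset.Icc 1 k, (1 - a ^ i) * coeff (k - i) F := by
  intro k
  induction k using Nat.strong_induction_on with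
  | _ k ih =>
    rcases k with _ | _ | k
    · simp
    · have h1 := rel_one h
      rw [show Finset.Icc 1 1 = {1} from rfl, Finset.sum_singleton]
      have e0 : 1 - 1 = 0 := rfl
      rw [e0, pow_one]
      have hc0 : (coeff 0) F = constantCoeff F := by simp
      linear_combination (-(1 - a)) * h1 + (1 - a) * coeff 0 F * hbc
        + (a * b * c + a - a ^ 2 - b * c) * hc0
        - (a * b * c - a * b - a * c + a - b * c + b + c - 1) * hc0
    · have h2 := rel_two h k
      have ih1 := ih (k + 1) (by omega)
      have ih2 := ih k (by omega)
      have hkey := sum_key a (fun j => coeff j F) k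
      beta_reduce at hkey
      rw [hkey]
      linear_combination (-(1 - a)) * h2 + (1 + a) * ih1 + (-a) * ih2
        + (1 - a) * (coeff (k + 1) F - coeff k F) * hbc

end FAux

open FAux in
/-- The relation `f(xq^{2n})(1−x)(1−xq^{2n}) = f(x)(1−xq²)(1−xq^{2n−2})` together with
`f₀ = 1` uniquely determines the coefficients of the formal power series
`f(x) = Σ_{k≥0} f_k x^k`, and these coefficients satisfy the recurrence
`f_k = −((1−q²)(1−q^{2n−2})/(1−q^{2n})) Σ_{i=1}^{k} ((1−q^{2ni})/(1−q^{2nk})) f_{k−i}`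
for all `k ≥ 1`. -/
theorem f_series_unique_and_recurrence (n : ℕ) (hn : 1 ≤ n) (q : ℂ) (hq : q ≠ 0)
    (hru : ∀ m : ℕ, 0 < m → q ^ m ≠ 1) :
    (∃! F : PowerSeries ℂ,
        constantCoeff F = 1 ∧
        rescale (q ^ (2 * n)) F * (1 - X) * (1 - C (q ^ (2 * n)) * X) =
          F * (1 - C (q ^ 2) * X) * (1 - C (q ^ (2 * n - 2)) * X)) ∧
    (∀ F : PowerSeries ℂ,
        constantCoeff F = 1 →
        rescale (q ^ (2 * n)) F * (1 - X) * (1 - C (q ^ (2 * n)) * X) =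
          F * (1 - C (q ^ 2) * X) * (1 - C (q ^ (2 * n - 2)) * X) →
        ∀ k : ℕ, 1 ≤ k →
          coeff k F =
            -((1 - q ^ 2) * (1 - q ^ (2 * n - 2)) / (1 - q ^ (2 * n))) *
              ∑ i ∈ Finset.Icc 1 k,
                ((1 - q ^ (2 * n * i)) / (1 - q ^ (2 * n * k))) * coeff (k - i) F) := by
  set a : ℂ := q ^ (2 * n) with ha_def
  set b : ℂ := q ^ 2 with hb_def
  set c : ℂ := q ^ (2 * n - 2) with hc_def
  have hbc : b * c = a := by
    rw [hb_def, hc_def, ha_def, ← pow_add]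
    congr 1
    omega
  have hapow : ∀ k : ℕ, a ^ k = q ^ (2 * n * k) := by
    intro k
    rw [ha_def, ← pow_mul]
  have hane : ∀ k : ℕ, 1 ≤ k → (1 : ℂ) - a ^ k ≠ 0 := by
    intro k hk
    rw [hapow]
    exact sub_ne_zero.mpr (Ne.symm (hru (2 * n * k) (by positivity)))
  have h1a : (1 : ℂ) - a ≠ 0 := by simpa using hane 1 le_rfl
  -- uniqueness of solutions
  have huniq : ∀ F G : PowerSeries ℂ,
      constantCoeff F = 1 →
      rescale a F * (1 - X) * (1 - C a * X) = F * (1 - C b * X) * (1 - C c * X) →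
      constantCoeff G = 1 →
      rescale a G * (1 - X) * (1 - C a * X) = G * (1 - C b * X) * (1 - C c * X) →
      F = G := by
    intro F G hF0 hF hG0 hG
    ext k
    induction k using Nat.strong_induction_on with
    | _ k ih =>
      rcases k with _ | _ | k
      · rw [coeff_zero_eq_constantCoeff]
        simp [hF0, hG0]
      · have h0F : coeff 0 F = 1 := by rw [coeff_zero_eq_constantCoeff]; exact hF0
        have h0G : coeff 0 G = 1 := by rw [coeff_zero_eq_constantCoeff]; exact hG0
        have hF1 := rel_one hF
        have hG1 := rel_one hG
        have key : (1 - a) * coeff 1 F = (1 - a) * coeff 1 G := by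
          linear_combination (-1 : ℂ) * hF1 + hG1 - (1 + a - b - c) * hF0
            + (1 + a - b - c) * hG0
        exact mul_left_cancel₀ h1a key
      · have hF2 := rel_two hF k
        have hG2 := rel_two hG k
        have ih1 := ih (k + 1) (by omega)
        have ih0 := ih k (by omega)
        have hne := hane (k + 2) (by omega)
        have key : (1 - a ^ (k + 2)) * coeff (k + 2) F
            = (1 - a ^ (k + 2)) * coeff (k + 2) G := by
          linear_combination (-1 : ℂ) * hF2 + hG2
            - ((1 + a) * a ^ (k + 1) - (b + c)) * ih1 - (b * c - a ^ (k + 1)) * ih0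
        exact mul_left_cancel₀ hne key
  constructor
  · refine ⟨mk (g a b c), ⟨?_, mk_g_eq hbc hane⟩, ?_⟩
    · rw [constantCoeff_mk, g_zero]
    · intro G hG
      apply huniq G (mk (g a b c)) hG.1 hG.2 (by rw [constantCoeff_mk, g_zero])
        (mk_g_eq hbc hane)
  · intro F hF0 hF k hk
    have hmain := rec_main hbc hF k
    have hnek := hane k hk
    have hsum : (∑ i ∈ Finset.Icc 1 k, ((1 - q ^ (2 * n * i)) / (1 - q ^ (2 * n * k))) *
          coeff (k - i) F)
        = (∑ i ∈ Finset.Icc 1 k, (1 - a ^ i) * coeff (k - i) F) / (1 - a ^ k) := by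
      rw [Finset.sum_div]
      apply Finset.sum_congr rfl
      intro i _
      rw [hapow i, hapow k]
      ring
    rw [hsum]
    field_simp [h1a, hnek]
    linear_combination hmain
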